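/- Let n = n₁ + n₂ with n₁, n₂ ≥ 2 and let ξ_{n₁n₂} be the 2-order Gray code map. Then Σ_{i=1}^{2^{n₁−1}} θ(n, ξ_{n₁n₂}^{-1}(F_i^{n₁} × N_{2^{n₂}})) = 2^{n−n₁}(3·2^{2n₁−3} − 2^{n₁−1}), where F_i^{n₁} = {i,...,i+2^{n₁−1}−1} and N_{2^{n₂}} = {1,...,2^{n₂}}. -/
import Mathlib


open Finset

/-- Number of coordinates in which two 0-1 vectors differ. -/
def diffCount {n : ℕ} (u v : Fin n → Bool) : ℕ :=
  (Finset.univ.filter fun i => u i ≠ v i).card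

/-- Adjacency in the hypercube `Q_n`: differ in exactly one coordinate. -/
def cubeAdj {n : ℕ} (u v : Fin n → Bool) : Prop := diffCount u v = 1

instance {n : ℕ} (u v : Fin n → Bool) : Decidable (cubeAdj u v) :=
  inferInstanceAs (Decidable (diffCount u v = 1))

/-- `theta n S`: number of edges of `Q_n` with exactly one endpoint in `S`. -/
def theta (n : ℕ) (S : Finset (Fin n → Bool)) : ℕ :=
  ((Finset.univ ×ˢ Finset.univ).filter fun p : (Fin n → Bool) × (Fin n → Bool) =>
    p.1 ∈ S ∧ p.2 ∉ S ∧ cubeAdj p.1 p.2).card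

/-- The reflected Gray code map `ξ_n : {0,1}^n → {1,...,2^n}`. -/
def gray : (n : ℕ) → (Fin n → Bool) → ℕ
  | 0, _ => 1
  | n + 1, v =>
    if v 0 = false then gray n (fun i => v i.succ)
    else 2 ^ (n + 1) + 1 - gray n (fun i => v i.succ)

/-- Wirelength of an embedding `f` of `Q_n` into a host with distance `d`. -/
def wirelength {n : ℕ} {α : Type*} (d : α → α → ℕ) (f : (Fin n → Bool) → α) : ℕ :=
  (∑ u : Fin n → Bool, ∑ v : Fin n → Bool, if cubeAdj u v then d (f u) (f v) else 0) / 2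

/-- Cyclic distance on the cycle with `m` vertices labeled `1,...,m`. -/
def cycDist (m a b : ℕ) : ℕ := min (Nat.dist a b) (m - Nat.dist a b)

/-- The 2-order Gray code map. -/
def gray2 (n₁ n₂ : ℕ) (v : Fin (n₁ + n₂) → Bool) : ℕ × ℕ :=
  (gray n₁ fun i => v (Fin.castAdd n₂ i), gray n₂ fun i => v (Fin.natAdd n₁ i))

lemma diffCount_eq_zero {n : ℕ} {u v : Fin n → Bool} : diffCount u v = 0 ↔ u = v := by
  simp [diffCount, Finset.card_eq_zero, Finset.filter_eq_empty_iff, funext_iff]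

lemma diffCount_cons {n : ℕ} (b b' : Bool) (w w' : Fin n → Bool) :
    diffCount (Fin.cons b w) (Fin.cons b' w') = (if b = b' then 0 else 1) + diffCount w w' := by
  simp only [diffCount, Finset.card_filter, Fin.sum_univ_succ, Fin.cons_zero, Fin.cons_succ]
  split <;> simp_all

lemma cubeAdj_cons {n : ℕ} {b b' : Bool} {w w' : Fin n → Bool} :
    cubeAdj (Fin.cons b w) (Fin.cons b' w') ↔
      (b = b' ∧ cubeAdj w w') ∨ (b ≠ b' ∧ w = w') := by
  simp only [cubeAdj, diffCount_cons, ← diffCount_eq_zero (u := w) (v := w')]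
  split <;> rename_i h <;> simp [h] <;> omega

lemma gray_succ {n : ℕ} (v : Fin (n+1) → Bool) :
    gray (n+1) v = if v 0 = false then gray n (fun i => v i.succ)
    else 2 ^ (n + 1) + 1 - gray n (fun i => v i.succ) := rfl

lemma gray_cons {n : ℕ} (b : Bool) (w : Fin n → Bool) :
    gray (n+1) (Fin.cons b w) = if b then 2 ^ (n + 1) + 1 - gray n w else gray n w := by
  rw [gray_succ]
  cases b <;> simp [Fin.cons_succ]

lemma gray_bounds {n : ℕ} (v : Fin n → Bool) : 1 ≤ gray n v ∧ gray n v ≤ 2 ^ n := by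
  induction n with
  | zero => simp [gray]
  | succ n ih =>
    have h := ih (fun i => v i.succ)
    rw [gray_succ]
    have : (2:ℕ)^n ≤ 2^(n+1) := by rw [pow_succ]; omega
    split <;> omega

lemma gray_inj {n : ℕ} : Function.Injective (gray n) := by
  induction n with
  | zero =>
    intro u v _
    funext i; exact i.elim0
  | succ n ih =>
    intro u v huv
    have hu := gray_bounds (fun i => u i.succ)
    have hv := gray_bounds (fun i => v i.succ)
    rw [gray_succ, gray_succ] at huv
    have h2 : (2:ℕ)^n ≤ 2^(n+1) := by rw [pow_succ]; omega
    have htail : (fun i : Fin n => u i.succ) = (fun i : Fin n => v i.succ) ∧ u 0 = v 0 := by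
      rcases hb : u 0 <;> rcases hb' : v 0 <;> simp [hb, hb'] at huv ⊢ <;>
        [skip; skip; skip; skip] <;> first
      | exact ih (by omega)
      | omega
    funext i
    rcases Fin.eq_zero_or_eq_succ i with rfl | ⟨j, rfl⟩
    · exact htail.2
    · exact congrFun htail.1 j

lemma gray_image {n : ℕ} :
    Finset.image (gray n) Finset.univ = Finset.Icc 1 (2^n) := by
  apply Finset.eq_of_subset_of_card_le
  · intro x hx
    simp only [Finset.mem_image] at hx
    obtain ⟨v, _, rfl⟩ := hx
    have := gray_bounds v
    simp [Finset.mem_Icc]; omega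
  · rw [Nat.card_Icc, Finset.card_image_of_injective _ gray_inj]
    simp [Fintype.card_fun]

lemma gray_sum {n : ℕ} (F : ℕ → ℕ) :
    ∑ v : Fin n → Bool, F (gray n v) = ∑ k ∈ Finset.Icc 1 (2^n), F k := by
  rw [← gray_image, Finset.sum_image (fun a _ b _ h => gray_inj h)]

lemma sum_cons_split {M : Type*} [AddCommMonoid M] {n : ℕ} (F : (Fin (n+1) → Bool) → M) :
    ∑ v : Fin (n+1) → Bool, F v
      = (∑ w : Fin n → Bool, F (Fin.cons false w)) + ∑ w : Fin n → Bool, F (Fin.cons true w) := by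
  rw [← Fintype.sum_equiv (Fin.consEquiv (fun _ => Bool)) (fun p => F (Fin.cons p.1 p.2)) F
    (fun p => by simp [Fin.consEquiv])]
  rw [Fintype.sum_prod_type, Fintype.sum_bool]
  exact add_comm _ _

lemma gray_total (n : ℕ) : 2 * ∑ v : Fin n → Bool, gray n v = 2^n * (2^n + 1) := by
  induction n with
  | zero => simp [gray]
  | succ n ih =>
    rw [sum_cons_split (F := gray (n+1))]
    have h1 : ∑ w : Fin n → Bool, gray (n+1) (Fin.cons false w) = ∑ w : Fin n → Bool, gray n w := by
      apply Finset.sum_congr rfl; intro w _; rw [gray_cons]; simp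
    have h2 : (∑ w : Fin n → Bool, gray (n+1) (Fin.cons true w))
        + ∑ w : Fin n → Bool, gray n w = 2^n * (2^(n+1) + 1) := by
      rw [← Finset.sum_add_distrib]
      have : ∀ w : Fin n → Bool, gray (n+1) (Fin.cons true w) + gray n w = 2^(n+1) + 1 := by
        intro w
        rw [gray_cons]
        have := gray_bounds w
        have h2 : (2:ℕ)^n ≤ 2^(n+1) := by rw [pow_succ]; omega
        simp; omega
      rw [Finset.sum_congr rfl (fun w _ => this w)]
      simp [Finset.card_univ, Fintype.card_fun, mul_comm]
    rw [h1, add_comm, h2]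
    ring

lemma cubeAdj_cons_same {n : ℕ} (b : Bool) (w w' : Fin n → Bool) :
    cubeAdj (Fin.cons b w) (Fin.cons b w') ↔ cubeAdj w w' := by
  rw [cubeAdj_cons]; simp

lemma cubeAdj_cons_diff {n : ℕ} {b b' : Bool} (hb : b ≠ b') (w w' : Fin n → Bool) :
    cubeAdj (Fin.cons b w) (Fin.cons b' w') ↔ w = w' := by
  rw [cubeAdj_cons]; simp [hb]

lemma edgeSum_succ {n : ℕ} (T : (Fin (n+1) → Bool) → (Fin (n+1) → Bool) → ℕ) :
    (∑ u : Fin (n+1) → Bool, ∑ v : Fin (n+1) → Bool, if cubeAdj u v then T u v else 0)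
    = (∑ w : Fin n → Bool, ∑ w' : Fin n → Bool,
        if cubeAdj w w' then T (Fin.cons false w) (Fin.cons false w') else 0)
    + (∑ w : Fin n → Bool, ∑ w' : Fin n → Bool,
        if cubeAdj w w' then T (Fin.cons true w) (Fin.cons true w') else 0)
    + ∑ w : Fin n → Bool,
        (T (Fin.cons false w) (Fin.cons true w) + T (Fin.cons true w) (Fin.cons false w)) := by
  rw [sum_cons_split (F := fun u => ∑ v : Fin (n+1) → Bool, if cubeAdj u v then T u v else 0)]
  have inner : ∀ (b : Bool) (w : Fin n → Bool),
      (∑ v : Fin (n+1) → Bool, if cubeAdj (Fin.cons b w) v then T (Fin.cons b w) v else 0)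
      = (∑ w' : Fin n → Bool, if cubeAdj w w' then T (Fin.cons b w) (Fin.cons b w') else 0)
      + T (Fin.cons b w) (Fin.cons (!b) w) := by
    intro b w
    rw [sum_cons_split (F := fun v => if cubeAdj (Fin.cons b w) v then T (Fin.cons b w) v else 0)]
    have hsame : ∀ w' : Fin n → Bool,
        (if cubeAdj (Fin.cons b w) (Fin.cons b w') then T (Fin.cons b w) (Fin.cons b w') else 0)
        = if cubeAdj w w' then T (Fin.cons b w) (Fin.cons b w') else 0 := fun w' => by
      simp only [cubeAdj_cons_same]
    have hdiff : ∀ w' : Fin n → Bool,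
        (if cubeAdj (Fin.cons b w) (Fin.cons (!b) w') then T (Fin.cons b w) (Fin.cons (!b) w') else 0)
        = if w = w' then T (Fin.cons b w) (Fin.cons (!b) w') else 0 := fun w' =>
      if_congr (cubeAdj_cons_diff (by cases b <;> simp) w w') rfl rfl
    cases b <;> simp only [Bool.not_false, Bool.not_true] at hdiff ⊢ <;>
      rw [Finset.sum_congr rfl (fun w' _ => hsame w'), Finset.sum_congr rfl (fun w' _ => hdiff w'),
        Finset.sum_ite_eq Finset.univ w _, if_pos (Finset.mem_univ w)] <;> ring
  rw [Finset.sum_congr rfl (fun w _ => inner false w),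
      Finset.sum_congr rfl (fun w _ => inner true w)]
  simp only [Bool.not_false, Bool.not_true, Finset.sum_add_distrib]
  ring


def Ln (n : ℕ) : ℕ :=
  ∑ u : Fin n → Bool, ∑ v : Fin n → Bool,
    if cubeAdj u v then Nat.dist (gray n u) (gray n v) else 0

def Cn (n : ℕ) : ℕ :=
  ∑ u : Fin n → Bool, ∑ v : Fin n → Bool,
    if cubeAdj u v then cycDist (2^n) (gray n u) (gray n v) else 0

lemma pow_succ_two (n : ℕ) : (2:ℕ)^(n+1) = 2 * 2^n := by rw [pow_succ]; ring

lemma Ln_val (n : ℕ) : Ln n + 2^n = 4^n := by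
  induction n with
  | zero => simp [Ln, cubeAdj, diffCount]
  | succ n ih =>
    have hb : ∀ w : Fin n → Bool, 1 ≤ gray n w ∧ gray n w ≤ 2^n := fun w => gray_bounds w
    have h2 : (2:ℕ)^(n+1) = 2 * 2^n := pow_succ_two n
    rw [Ln, edgeSum_succ]
    have e1 : (∑ w : Fin n → Bool, ∑ w' : Fin n → Bool,
        if cubeAdj w w' then Nat.dist (gray (n+1) (Fin.cons false w)) (gray (n+1) (Fin.cons false w')) else 0)
        = Ln n := by
      apply Finset.sum_congr rfl; intro w _; apply Finset.sum_congr rfl; intro w' _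
      rw [gray_cons, gray_cons]; simp
    have e2 : (∑ w : Fin n → Bool, ∑ w' : Fin n → Bool,
        if cubeAdj w w' then Nat.dist (gray (n+1) (Fin.cons true w)) (gray (n+1) (Fin.cons true w')) else 0)
        = Ln n := by
      apply Finset.sum_congr rfl; intro w _; apply Finset.sum_congr rfl; intro w' _
      rw [gray_cons, gray_cons]
      have := hb w; have := hb w'
      simp only [if_pos]
      congr 1
      simp [Nat.dist]; omega
    rw [e1, e2]
    set S := ∑ v : Fin n → Bool, gray n v with hS
    have hpt : ∀ w : Fin n → Bool,
        (Nat.dist (gray (n+1) (Fin.cons false w)) (gray (n+1) (Fin.cons true w))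
        + Nat.dist (gray (n+1) (Fin.cons true w)) (gray (n+1) (Fin.cons false w)))
        + 4 * gray n w = 2 * (2^(n+1) + 1) := by
      intro w
      rw [gray_cons, gray_cons]
      have := hb w
      simp only [if_true, Bool.false_eq_true, if_false]
      simp [Nat.dist]; omega
    have hcross : (∑ w : Fin n → Bool,
        (Nat.dist (gray (n+1) (Fin.cons false w)) (gray (n+1) (Fin.cons true w))
        + Nat.dist (gray (n+1) (Fin.cons true w)) (gray (n+1) (Fin.cons false w))))
        + 4 * S = 2^n * (2 * (2^(n+1) + 1)) := by
      rw [hS, Finset.mul_sum, ← Finset.sum_add_distrib,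
        Finset.sum_congr rfl (fun w _ => hpt w), Finset.sum_const, Finset.card_univ]
      simp [Fintype.card_fun]
    have hgt := gray_total n
    have p1 : (4:ℕ)^(n+1) = 4 * 4^n := by rw [pow_succ]; ring
    have hnn : (2:ℕ)^n * 2^n = 4^n := by rw [← mul_pow]; norm_num
    have p3 : (2:ℕ)^n * (2^n + 1) = 4^n + 2^n := by nlinarith [hnn]
    have p4 : (2:ℕ)^n * (2 * (2^(n+1) + 1)) = 4 * 4^n + 2 * 2^n := by
      rw [h2]; nlinarith [hnn]
    omega

lemma Icc1_Ioc (n : ℕ) : Finset.Icc 1 n = Finset.Ioc 0 n := by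
  ext k; simp [Nat.lt_iff_add_one_le]

lemma sumOdd (m : ℕ) : ∑ k ∈ Finset.Icc 1 m, (2*k-1) = m^2 := by
  induction m with
  | zero => simp
  | succ m ih =>
    rw [Finset.sum_Icc_succ_top (by omega), ih]
    ring_nf; omega

lemma sumOdd' (m : ℕ) : ∑ k ∈ Finset.Icc 1 m, (2*m+1-2*k) = m^2 := by
  have h : ∑ k ∈ Finset.Icc 1 m, ((2*m+1-2*k) + (2*k-1)) = ∑ k ∈ Finset.Icc 1 m, 2*m := by
    apply Finset.sum_congr rfl; intro k hk
    simp only [Finset.mem_Icc] at hk; omega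
  rw [Finset.sum_add_distrib, sumOdd, Finset.sum_const, Nat.card_Icc] at h
  simp at h; nlinarith [h]

lemma sumMin (m : ℕ) :
    ∑ k ∈ Finset.Icc 1 (2*m), min (2*k-1) (4*m+1-2*k) = 2*m^2 := by
  rw [Icc1_Ioc, ← Finset.sum_Ioc_consecutive _ (Nat.zero_le m) (by omega : m ≤ 2*m)]
  have h1 : ∑ k ∈ Finset.Ioc 0 m, min (2*k-1) (4*m+1-2*k) = ∑ k ∈ Finset.Ioc 0 m, (2*k-1) := by
    apply Finset.sum_congr rfl; intro k hk; simp only [Finset.mem_Ioc] at hk; omega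
  have h2 : ∑ k ∈ Finset.Ioc m (2*m), min (2*k-1) (4*m+1-2*k)
      = ∑ k ∈ Finset.Ioc m (2*m), (4*m+1-2*k) := by
    apply Finset.sum_congr rfl; intro k hk; simp only [Finset.mem_Ioc] at hk; omega
  have h3 : ∑ k ∈ Finset.Ioc m (2*m), (4*m+1-2*k) = ∑ j ∈ Finset.Ioc 0 m, (2*m+1-2*j) := by
    rw [show 2*m = m + m by ring, show (Finset.Ioc m (m+m)) = (Finset.Ioc 0 m).map
      (addLeftEmbedding m) from by rw [Finset.map_add_left_Ioc]; simp, Finset.sum_map]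
    apply Finset.sum_congr rfl; intro j hj
    simp only [Finset.mem_Ioc] at hj
    simp [addLeftEmbedding]; omega
  rw [h1, h2, h3, ← Icc1_Ioc, sumOdd, sumOdd']
  ring

lemma cycDist_small {N a b : ℕ} (h : Nat.dist a b ≤ N) : cycDist (2*N) a b = Nat.dist a b := by
  simp only [cycDist]; omega

lemma dist_le_of_bounds {N a b : ℕ} (ha : a ≤ N) (hb : b ≤ N) : Nat.dist a b ≤ N := by
  simp [Nat.dist]; omega

lemma dist_reflect {x y c : ℕ} (hx : x ≤ c) (hy : y ≤ c) :
    Nat.dist (c - x) (c - y) = Nat.dist x y := by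
  simp only [Nat.dist]; omega

lemma Cn_val (n : ℕ) (hn : 1 ≤ n) : Cn (n+1) + 2^(n+1) = 3 * 4^n := by
  have hb : ∀ w : Fin n → Bool, 1 ≤ gray n w ∧ gray n w ≤ 2^n := fun w => gray_bounds w
  have h2 : (2:ℕ)^(n+1) = 2 * 2^n := pow_succ_two n
  rw [Cn, edgeSum_succ]
  have e1 : (∑ w : Fin n → Bool, ∑ w' : Fin n → Bool,
      if cubeAdj w w' then cycDist (2^(n+1)) (gray (n+1) (Fin.cons false w)) (gray (n+1) (Fin.cons false w')) else 0)
      = Ln n := by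
    apply Finset.sum_congr rfl; intro w _; apply Finset.sum_congr rfl; intro w' _
    by_cases hc : cubeAdj w w'
    · simp only [hc, if_true]
      rw [gray_cons, gray_cons]
      simp only [Bool.false_eq_true, if_false]
      rw [h2]
      exact cycDist_small (dist_le_of_bounds (hb w).2 (hb w').2)
    · simp only [hc, if_false]
  have e2 : (∑ w : Fin n → Bool, ∑ w' : Fin n → Bool,
      if cubeAdj w w' then cycDist (2^(n+1)) (gray (n+1) (Fin.cons true w)) (gray (n+1) (Fin.cons true w')) else 0)
      = Ln n := by
    apply Finset.sum_congr rfl; intro w _; apply Finset.sum_congr rfl; intro w' _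
    by_cases hc : cubeAdj w w'
    · simp only [hc, if_true]
      rw [gray_cons, gray_cons]
      simp only [reduceIte]
      have hw := hb w; have hw' := hb w'
      rw [h2, cycDist_small (by simp [Nat.dist]; omega)]
      exact dist_reflect (by omega) (by omega)

    · simp only [hc, if_false]
  rw [e1, e2]
  have hpt : ∀ w : Fin n → Bool,
      cycDist (2^(n+1)) (gray (n+1) (Fin.cons false w)) (gray (n+1) (Fin.cons true w))
      + cycDist (2^(n+1)) (gray (n+1) (Fin.cons true w)) (gray (n+1) (Fin.cons false w))
      = 2 * min (2 * gray n w - 1) (2 * 2^n + 1 - 2 * gray n w) := by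
    intro w
    rw [gray_cons, gray_cons]
    have hw := hb w
    simp only [reduceIte, Bool.false_eq_true, if_false]
    simp only [cycDist, Nat.dist, h2]
    omega
  rw [Finset.sum_congr rfl (fun w _ => hpt w), ← Finset.mul_sum,
    gray_sum (fun k => min (2 * k - 1) (2 * 2^n + 1 - 2 * k))]
  have hm : (2:ℕ)^n = 2 * 2^(n-1) := by
    rw [← pow_succ_two]; congr 1; omega
  have hk : ∀ k : ℕ, min (2*k-1) (2*2^n+1-2*k) = min (2*k-1) (4*(2^(n-1))+1-2*k) :=
    fun k => by rw [hm]; congr 1; ring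
  have hsum : ∑ k ∈ Finset.Icc 1 (2^n), min (2 * k - 1) (2 * 2^n + 1 - 2 * k)
      = 2 * (2^(n-1))^2 := by
    simp only [hk]
    rw [hm]
    exact sumMin (2^(n-1))
  rw [hsum]
  have q1 : ((2:ℕ)^(n-1))^2 = 4^(n-1) := by
    rw [← pow_mul, mul_comm, pow_mul]; norm_num
  have q2 : (4:ℕ)^n = 4 * 4^(n-1) := by
    conv_lhs => rw [show n = (n-1)+1 by omega]
    rw [pow_succ]; ring
  have q3 : (2:ℕ)^n = 2 * 2^(n-1) := hm
  have := Ln_val n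
  omega

lemma window_aux {h a b : ℕ} (hh : 1 ≤ h) (ha : 1 ≤ a) (ha2 : a ≤ 2*h)
    (hb : 1 ≤ b) (hb2 : b ≤ 2*h) (hab : a ≤ b) :
    ((Finset.Icc 1 h).filter fun i => a ∈ Finset.Icc i (i+h-1) ∧ b ∉ Finset.Icc i (i+h-1)).card
    + ((Finset.Icc 1 h).filter fun i => b ∈ Finset.Icc i (i+h-1) ∧ a ∉ Finset.Icc i (i+h-1)).card
    = cycDist (2*h) a b := by
  have e1 : ((Finset.Icc 1 h).filter fun i => a ∈ Finset.Icc i (i+h-1) ∧ b ∉ Finset.Icc i (i+h-1))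
      = Finset.Icc (max 1 (a+1-h)) (min (min a h) (b-h)) := by
    ext i; simp only [Finset.mem_filter, Finset.mem_Icc]; omega
  have e2 : ((Finset.Icc 1 h).filter fun i => b ∈ Finset.Icc i (i+h-1) ∧ a ∉ Finset.Icc i (i+h-1))
      = Finset.Icc (max (a+1) (max 1 (b+1-h))) (min b h) := by
    ext i; simp only [Finset.mem_filter, Finset.mem_Icc]; omega
  rw [e1, e2, Nat.card_Icc, Nat.card_Icc]
  simp only [cycDist, Nat.dist]
  omega

lemma window {h a b : ℕ} (hh : 1 ≤ h) (ha : 1 ≤ a) (ha2 : a ≤ 2*h)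
    (hb : 1 ≤ b) (hb2 : b ≤ 2*h) :
    ((Finset.Icc 1 h).filter fun i => a ∈ Finset.Icc i (i+h-1) ∧ b ∉ Finset.Icc i (i+h-1)).card
    + ((Finset.Icc 1 h).filter fun i => b ∈ Finset.Icc i (i+h-1) ∧ a ∉ Finset.Icc i (i+h-1)).card
    = cycDist (2*h) a b := by
  rcases le_total a b with hab | hab
  · exact window_aux hh ha ha2 hb hb2 hab
  · rw [add_comm, show cycDist (2*h) a b = cycDist (2*h) b a by simp [cycDist, Nat.dist_comm]]
    exact window_aux hh hb hb2 ha ha2 hab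

lemma sum_append_split {M : Type*} [AddCommMonoid M] {n₁ n₂ : ℕ} (F : (Fin (n₁+n₂) → Bool) → M) :
    ∑ v : Fin (n₁+n₂) → Bool, F v
      = ∑ x : Fin n₁ → Bool, ∑ y : Fin n₂ → Bool, F (Fin.append x y) := by
  rw [← Fintype.sum_equiv (Fin.appendEquiv n₁ n₂) (fun p => F (Fin.append p.1 p.2)) F
    (fun p => rfl), Fintype.sum_prod_type]

lemma diffCount_append {n₁ n₂ : ℕ} (x x' : Fin n₁ → Bool) (y y' : Fin n₂ → Bool) :
    diffCount (Fin.append x y) (Fin.append x' y') = diffCount x x' + diffCount y y' := by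
  simp only [diffCount, Finset.card_filter, Fin.sum_univ_add, Fin.append_left, Fin.append_right]

lemma cubeAdj_append {n₁ n₂ : ℕ} (x x' : Fin n₁ → Bool) (y y' : Fin n₂ → Bool) :
    cubeAdj (Fin.append x y) (Fin.append x' y') ↔
      (cubeAdj x x' ∧ y = y') ∨ (x = x' ∧ cubeAdj y y') := by
  simp only [cubeAdj, diffCount_append, ← diffCount_eq_zero (u := y) (v := y'),
    ← diffCount_eq_zero (u := x) (v := x')]
  omega

lemma cycDist_self (m a : ℕ) : cycDist m a a = 0 := by
  simp [cycDist, Nat.dist_self]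

lemma front_append {n₁ n₂ : ℕ} (x : Fin n₁ → Bool) (y : Fin n₂ → Bool) :
    (fun j => (Fin.append x y) (Fin.castAdd n₂ j)) = x := by
  funext j; exact Fin.append_left x y j

lemma prod_edge_sum {n₁ n₂ : ℕ} (D : ℕ → ℕ → ℕ) (hD : ∀ k, D k k = 0) :
    (∑ u : Fin (n₁+n₂) → Bool, ∑ v : Fin (n₁+n₂) → Bool,
      if cubeAdj u v then D (gray n₁ fun j => u (Fin.castAdd n₂ j)) (gray n₁ fun j => v (Fin.castAdd n₂ j)) else 0)
    = 2^n₂ * ∑ x : Fin n₁ → Bool, ∑ x' : Fin n₁ → Bool,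
        if cubeAdj x x' then D (gray n₁ x) (gray n₁ x') else 0 := by
  rw [sum_append_split]
  have inner : ∀ (x : Fin n₁ → Bool) (y : Fin n₂ → Bool),
      (∑ v : Fin (n₁+n₂) → Bool, if cubeAdj (Fin.append x y) v then
        D (gray n₁ fun j => (Fin.append x y) (Fin.castAdd n₂ j)) (gray n₁ fun j => v (Fin.castAdd n₂ j)) else 0)
      = ∑ x' : Fin n₁ → Bool, if cubeAdj x x' then D (gray n₁ x) (gray n₁ x') else 0 := by
    intro x y
    rw [sum_append_split (F := fun v => if cubeAdj (Fin.append x y) v then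
      D (gray n₁ fun j => (Fin.append x y) (Fin.castAdd n₂ j)) (gray n₁ fun j => v (Fin.castAdd n₂ j)) else 0)]
    apply Finset.sum_congr rfl; intro x' _
    have hpt : ∀ y' : Fin n₂ → Bool,
        (if cubeAdj (Fin.append x y) (Fin.append x' y') then
          D (gray n₁ fun j => (Fin.append x y) (Fin.castAdd n₂ j))
            (gray n₁ fun j => (Fin.append x' y') (Fin.castAdd n₂ j)) else 0)
        = if cubeAdj x x' ∧ y = y' then D (gray n₁ x) (gray n₁ x') else 0 := by
      intro y'
      rw [front_append, front_append]
      by_cases hc : cubeAdj (Fin.append x y) (Fin.append x' y')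
      · rw [if_pos hc]
        rw [cubeAdj_append] at hc
        rcases hc with ⟨h1, rfl⟩ | ⟨rfl, h2⟩
        · rw [if_pos ⟨h1, rfl⟩]
        · simp [hD]
      · rw [if_neg hc, cubeAdj_append] at *
        by_cases h3 : cubeAdj x x' ∧ y = y'
        · exact absurd (Or.inl h3) hc
        · rw [if_neg h3]
    rw [Finset.sum_congr rfl (fun y' _ => hpt y')]
    by_cases hc : cubeAdj x x'
    · simp only [hc, true_and, if_pos]
      rw [Finset.sum_ite_eq Finset.univ y (fun _ => D (gray n₁ x) (gray n₁ x')),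
        if_pos (Finset.mem_univ y)]
    · simp [hc]
  rw [Finset.sum_congr rfl (fun x _ => Finset.sum_congr rfl (fun y _ => inner x y))]
  rw [Finset.sum_congr rfl (fun x (_ : x ∈ Finset.univ) => by
    rw [Finset.sum_const, Finset.card_univ]
    simp [Fintype.card_fun] : ∀ x ∈ Finset.univ, _ = 2^n₂ * ∑ x' : Fin n₁ → Bool,
      if cubeAdj x x' then D (gray n₁ x) (gray n₁ x') else 0)]
  rw [← Finset.mul_sum]


lemma cubeAdj_comm {n : ℕ} {u v : Fin n → Bool} : cubeAdj u v ↔ cubeAdj v u := by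
  have : diffCount u v = diffCount v u := by
    simp only [diffCount]; congr 1; ext i; simp [ne_comm]
  simp [cubeAdj, this]

lemma pow2_split (x y z : ℕ) (h : x = y + z) : (2:ℕ)^x = 2^y * 2^z := by rw [h, pow_add]

theorem stmt10 (n₁ n₂ : ℕ) (h₁ : 2 ≤ n₁) (h₂ : 2 ≤ n₂) :
    ∑ i ∈ Finset.Icc 1 (2 ^ (n₁ - 1)),
        theta (n₁ + n₂) (Finset.univ.filter fun v : Fin (n₁ + n₂) → Bool =>
          gray2 n₁ n₂ v ∈ (Finset.Icc i (i + 2 ^ (n₁ - 1) - 1)) ×ˢ Finset.Icc 1 (2 ^ n₂)) =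
      2 ^ (n₁ + n₂ - n₁) * (3 * 2 ^ (2 * n₁ - 3) - 2 ^ (n₁ - 1)) := by
  set h := (2:ℕ) ^ (n₁ - 1) with hh
  set g₁ : (Fin (n₁ + n₂) → Bool) → ℕ := fun v => gray n₁ (fun j => v (Fin.castAdd n₂ j)) with hg₁
  have hgb : ∀ v : Fin (n₁+n₂) → Bool, 1 ≤ g₁ v ∧ g₁ v ≤ 2^n₁ :=
    fun v => gray_bounds _
  have h2h : (2:ℕ)^n₁ = 2 * h := by
    rw [hh, ← pow_succ']; congr 1; omega
  -- Step A: rewrite theta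
  have hmem : ∀ (i : ℕ) (v : Fin (n₁+n₂) → Bool),
      (v ∈ Finset.univ.filter fun v : Fin (n₁ + n₂) → Bool =>
        gray2 n₁ n₂ v ∈ (Finset.Icc i (i + h - 1)) ×ˢ Finset.Icc 1 (2 ^ n₂)) ↔
      g₁ v ∈ Finset.Icc i (i + h - 1) := by
    intro i v
    have hb2 := gray_bounds (fun j => v (Fin.natAdd n₁ j))
    simp only [Finset.mem_filter, Finset.mem_univ, true_and, gray2, Finset.mem_product,
      Finset.mem_Icc, hg₁]
    omega
  have theta_eq : ∀ i : ℕ, theta (n₁+n₂) (Finset.univ.filter fun v : Fin (n₁ + n₂) → Bool =>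
        gray2 n₁ n₂ v ∈ (Finset.Icc i (i + h - 1)) ×ˢ Finset.Icc 1 (2 ^ n₂))
      = ∑ u : Fin (n₁+n₂) → Bool, ∑ v : Fin (n₁+n₂) → Bool,
          if (g₁ u ∈ Finset.Icc i (i + h - 1) ∧ g₁ v ∉ Finset.Icc i (i + h - 1)) ∧ cubeAdj u v
          then 1 else 0 := by
    intro i
    rw [theta, Finset.card_filter, Finset.sum_product]
    exact Finset.sum_congr rfl fun u _ => Finset.sum_congr rfl fun v _ =>
      if_congr (by rw [hmem i u, hmem i v]; tauto) rfl rfl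
  rw [Finset.sum_congr rfl (fun i _ => theta_eq i), Finset.sum_comm,
    Finset.sum_congr rfl (fun u (_ : u ∈ Finset.univ) => Finset.sum_comm)]
  -- Step A': inner i-sum
  set f : ℕ → ℕ → ℕ := fun a b =>
    ((Finset.Icc 1 h).filter fun i => a ∈ Finset.Icc i (i+h-1) ∧ b ∉ Finset.Icc i (i+h-1)).card
    with hf
  have key : ∀ u v : Fin (n₁+n₂) → Bool,
      (∑ i ∈ Finset.Icc 1 h, if (g₁ u ∈ Finset.Icc i (i + h - 1) ∧ g₁ v ∉ Finset.Icc i (i + h - 1)) ∧ cubeAdj u v then 1 else 0)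
      = if cubeAdj u v then f (g₁ u) (g₁ v) else 0 := by
    intro u v
    by_cases hc : cubeAdj u v
    · rw [if_pos hc]
      show _ = ((Finset.Icc 1 h).filter fun i =>
        g₁ u ∈ Finset.Icc i (i+h-1) ∧ g₁ v ∉ Finset.Icc i (i+h-1)).card
      rw [Finset.card_filter]
      exact Finset.sum_congr rfl fun i _ => if_congr (by simp [hc]) rfl rfl
    · simp [hc]
  rw [Finset.sum_congr rfl (fun u (_ : u ∈ Finset.univ) =>
    Finset.sum_congr rfl (fun v _ => key u v))]
  set T := ∑ u : Fin (n₁+n₂) → Bool, ∑ v : Fin (n₁+n₂) → Bool,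
      if cubeAdj u v then f (g₁ u) (g₁ v) else 0 with hT
  -- Step B: symmetrize
  have hswap : T = ∑ u : Fin (n₁+n₂) → Bool, ∑ v : Fin (n₁+n₂) → Bool,
      if cubeAdj u v then f (g₁ v) (g₁ u) else 0 := by
    rw [hT, Finset.sum_comm]
    exact Finset.sum_congr rfl fun u _ => Finset.sum_congr rfl fun v _ =>
      if_congr cubeAdj_comm rfl rfl
  have hTT : T + T = ∑ u : Fin (n₁+n₂) → Bool, ∑ v : Fin (n₁+n₂) → Bool,
      if cubeAdj u v then cycDist (2^n₁) (g₁ u) (g₁ v) else 0 := by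
    nth_rewrite 2 [hswap]
    rw [hT, ← Finset.sum_add_distrib]
    apply Finset.sum_congr rfl; intro u _
    rw [← Finset.sum_add_distrib]
    apply Finset.sum_congr rfl; intro v _
    by_cases hc : cubeAdj u v
    · rw [if_pos hc, if_pos hc, if_pos hc, h2h]
      exact window Nat.one_le_two_pow (hgb u).1 (by rw [← h2h]; exact (hgb u).2)
        (hgb v).1 (by rw [← h2h]; exact (hgb v).2)
    · simp [hc]
  -- Step C: product split
  have hprod : (∑ u : Fin (n₁+n₂) → Bool, ∑ v : Fin (n₁+n₂) → Bool,
      if cubeAdj u v then cycDist (2^n₁) (g₁ u) (g₁ v) else 0) = 2^n₂ * Cn n₁ := by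
    rw [hg₁]
    exact prod_edge_sum (cycDist (2^n₁)) (cycDist_self _)
  -- Step D: arithmetic
  set a := (2:ℕ)^(n₁-2) with ha
  have haa : 1 ≤ a := Nat.one_le_two_pow
  set m := a * a with hm
  have ham : a ≤ m := by rw [hm]; nlinarith [haa]
  have f2 : (2:ℕ)^n₁ = 4 * a := by
    rw [ha, pow2_split n₁ 2 (n₁-2) (by omega)]; norm_num
  have f3 : (4:ℕ)^(n₁-1) = 4 * m := by
    have h4 : (4:ℕ)^(n₁-1) = 2^(2*(n₁-1)) := by
      rw [show (4:ℕ) = 2^2 from rfl, ← pow_mul]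
    rw [h4, pow2_split (2*(n₁-1)) 2 ((n₁-2)+(n₁-2)) (by omega), pow_add, hm, ha]
    ring
  have f4 : (2:ℕ)^(2*n₁-3) = 2 * m := by
    rw [pow2_split (2*n₁-3) 1 ((n₁-2)+(n₁-2)) (by omega), pow_add, hm, ha]
    norm_num
  have f5 : h = 2 * a := by
    rw [hh, ha, pow2_split (n₁-1) 1 (n₁-2) (by omega)]; norm_num
  have hCval : Cn n₁ + 2^n₁ = 3 * 4^(n₁-1) := by
    have := Cn_val (n₁-1) (by omega)
    rwa [show n₁-1+1 = n₁ by omega] at this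
  have hC : Cn n₁ = 12 * m - 4*a := by omega
  have hfin : T + T = 2^n₂ * (12 * m - 4*a) := by rw [hTT, hprod, hC]
  have hsub : (12:ℕ) * m - 4*a = 2 * (3 * (2*m) - 2*a) := by omega
  rw [show n₁ + n₂ - n₁ = n₂ by omega, f4, f5]
  set R := (2:ℕ)^n₂ * (3 * (2*m) - 2*a) with hR
  have hdouble : (2:ℕ)^n₂ * (12 * m - 4*a) = 2 * R := by
    rw [hR, hsub]; ring
  have hstep : T + T = 2 * R := by rw [hfin, hdouble]
  omega
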